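/- arXiv:0910.3142 — 3 statements merged into one kernel-verified Lean document; each statement's English description precedes it below -/
import Mathlib

section
/- There exists a unique formal power series exp_E(X) = Σ_{i≥0} e_i X^{q^i} over K with e_0 = 1 satisfying the functional equation φ(t)(exp_E(X)) = exp_E(t·X), where φ(t) = t + a_1 τ + ... + a_n τ^n is the t-action of a Drinfeld module and τ is the q-power Frobenius. -/
open scoped Classical in
/-- The formal power series `∑ e_i X^(q^i)` associated to a sequence of coefficients
`e : ℕ → K`. -/
noncomputable def qPowerSeries (K : Type*) [Field K] (q : ℕ) (e : ℕ → K) :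
    PowerSeries K :=
  PowerSeries.mk fun m => if h : ∃ i : ℕ, q ^ i = m then e (Nat.find h) else 0


section Aux

open scoped Classical

variable {K : Type*} [Field K]

lemma coeff_qPS {q : ℕ} (hq2 : 2 ≤ q) (e : ℕ → K) (i : ℕ) :
    PowerSeries.coeff (q ^ i) (qPowerSeries K q e) = e i := by
  have h : ∃ j : ℕ, q ^ j = q ^ i := ⟨i, rfl⟩
  rw [qPowerSeries, PowerSeries.coeff_mk, dif_pos h,
    Nat.pow_right_injective hq2 (Nat.find_spec h)]

lemma coeff_qPS_ne {q : ℕ} (e : ℕ → K) {m : ℕ} (h : ¬ ∃ i : ℕ, q ^ i = m) :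
    PowerSeries.coeff m (qPowerSeries K q e) = 0 := by
  rw [qPowerSeries, PowerSeries.coeff_mk, dif_neg h]

lemma ps_charP (p : ℕ) [Fact p.Prime] [CharP K p] : CharP (PowerSeries K) p :=
  charP_of_injective_ringHom (f := (PowerSeries.C : K →+* PowerSeries K))
    (fun a b h => by simpa using congrArg (PowerSeries.constantCoeff) h) p

lemma coeff_pow_p (p : ℕ) [Fact p.Prime] [CharP K p] (f : PowerSeries K) (N : ℕ) :
    PowerSeries.coeff N (f ^ p) =
      if p ∣ N then (PowerSeries.coeff (N / p) f) ^ p else 0 := by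
  haveI := ps_charP (K := K) p
  set T : Polynomial K := PowerSeries.trunc (N + 1) f with hT
  obtain ⟨g, hg⟩ : (PowerSeries.X : PowerSeries K) ^ (N + 1) ∣ (f - ↑T) := by
    rw [PowerSeries.X_pow_dvd_iff]
    intro m hm
    simp [hT, PowerSeries.coeff_trunc, hm]
  have hf : f = PowerSeries.X ^ (N + 1) * g + (↑T : PowerSeries K) := eq_add_of_sub_eq hg
  have hp1 : 1 ≤ p := (Fact.out : p.Prime).one_lt.le
  have key : PowerSeries.coeff N (f ^ p) = PowerSeries.coeff N ((T : PowerSeries K) ^ p) := by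
    rw [hf, add_pow_char, mul_pow, ← pow_mul, map_add]
    have hz : PowerSeries.coeff N ((PowerSeries.X : PowerSeries K) ^ ((N + 1) * p) * g ^ p) = 0 :=
      PowerSeries.X_pow_dvd_iff.mp (dvd_mul_right _ _) N (by nlinarith)
    rw [hz, zero_add]
  rw [key, ← Polynomial.coe_pow, ← Polynomial.map_frobenius_expand (p := p) T, Polynomial.coeff_coe,
    Polynomial.coeff_map, Polynomial.coeff_expand (Fact.out : p.Prime).pos]
  split_ifs with h
  · rw [frobenius_def, hT, PowerSeries.coeff_trunc, if_pos (Nat.lt_succ_of_le (Nat.div_le_self N p))]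
  · simp

lemma coeff_pow_p_pow (p : ℕ) [Fact p.Prime] [CharP K p] (s : ℕ) (f : PowerSeries K) (N : ℕ) :
    PowerSeries.coeff N (f ^ p ^ s) =
      if p ^ s ∣ N then (PowerSeries.coeff (N / p ^ s) f) ^ p ^ s else 0 := by
  have hp0 : p ≠ 0 := (Fact.out : p.Prime).pos.ne'
  induction s generalizing N with
  | zero => simp
  | succ s ih =>
    rw [show f ^ p ^ (s + 1) = (f ^ p ^ s) ^ p by rw [← pow_mul, ← pow_succ],
      coeff_pow_p p (f ^ p ^ s) N]
    by_cases h1 : p ∣ N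
    · rw [if_pos h1, ih (N / p)]
      by_cases h2 : p ^ s ∣ N / p
      · have hd : p ^ (s + 1) ∣ N := by
          rw [pow_succ, mul_comm]
          exact (Nat.dvd_div_iff_mul_dvd h1).mp h2
        rw [if_pos h2, if_pos hd, ← pow_mul, Nat.div_div_eq_div_mul, mul_comm p (p ^ s), pow_succ]
      · have hd : ¬ p ^ (s + 1) ∣ N := fun hc =>
          h2 ((Nat.dvd_div_iff_mul_dvd h1).mpr (by rwa [pow_succ, mul_comm] at hc))
        rw [if_neg h2, if_neg hd, zero_pow hp0]
    · rw [if_neg h1, if_neg (fun hc => h1 (dvd_trans (dvd_pow_self p s.succ_ne_zero) hc))]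

lemma coeff_pow_q (p : ℕ) [Fact p.Prime] [CharP K p] {q m : ℕ} (hqm : q = p ^ m)
    (i : ℕ) (f : PowerSeries K) (N : ℕ) :
    PowerSeries.coeff N (f ^ q ^ i) =
      if q ^ i ∣ N then (PowerSeries.coeff (N / q ^ i) f) ^ q ^ i else 0 := by
  have h : q ^ i = p ^ (m * i) := by rw [hqm, ← pow_mul]
  rw [h]
  exact coeff_pow_p_pow p (m * i) f N

lemma coeff_E_pow (p : ℕ) [Fact p.Prime] [CharP K p] {q m : ℕ} (hq2 : 2 ≤ q)
    (hqm : q = p ^ m) (e : ℕ → K) (i k : ℕ) :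
    PowerSeries.coeff (q ^ k) ((qPowerSeries K q e) ^ q ^ i) =
      if i ≤ k then e (k - i) ^ q ^ i else 0 := by
  rw [coeff_pow_q p hqm]
  by_cases h : i ≤ k
  · rw [if_pos (pow_dvd_pow q h), if_pos h, Nat.pow_div h (by omega), coeff_qPS hq2]
  · rw [if_neg, if_neg h]
    exact fun hc => h ((Nat.pow_dvd_pow_iff_le_right (by omega : 1 < q)).mp hc)

lemma coeff_E_pow_ne (p : ℕ) [Fact p.Prime] [CharP K p] {q m : ℕ} (hq2 : 2 ≤ q)
    (hqm : q = p ^ m) (e : ℕ → K) (i : ℕ) {N : ℕ} (h : ¬ ∃ j : ℕ, q ^ j = N) :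
    PowerSeries.coeff N ((qPowerSeries K q e) ^ q ^ i) = 0 := by
  rw [coeff_pow_q p hqm]
  split_ifs with hd
  · rw [coeff_qPS_ne, zero_pow (by positivity : q ^ i ≠ 0)]
    rintro ⟨j, hj⟩
    exact h ⟨i + j, by rw [pow_add, hj, Nat.mul_div_cancel' hd]⟩
  · rfl

end Aux

/-- Auxiliary sum appearing in the coefficient recursion. -/
noncomputable def drinS (K : Type*) [Field K] (q n : ℕ) (a : ℕ → K) (e : ℕ → K) (k : ℕ) : K :=
  ∑ i ∈ Finset.Icc 1 n, a i * (if i ≤ k then e (k - i) ^ q ^ i else 0)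

/-- The recursively defined coefficients of the Drinfeld exponential. -/
noncomputable def drinE (K : Type*) [Field K] (q n : ℕ) (t : K) (a : ℕ → K) : ℕ → K
  | 0 => 1
  | (k + 1) =>
      (∑ i ∈ (Finset.Icc 1 n).attach,
          a i.1 * (if i.1 ≤ k + 1 then drinE K q n t a (k + 1 - i.1) ^ q ^ i.1 else 0))
        / (t ^ q ^ (k + 1) - t)
  termination_by k => k
  decreasing_by
    have := (Finset.mem_Icc.mp i.2).1; omega

section Aux2

variable {K : Type*} [Field K]

lemma drinE_zero (q n : ℕ) (t : K) (a : ℕ → K) : drinE K q n t a 0 = 1 := by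
  rw [drinE]

lemma drinE_succ (q n : ℕ) (t : K) (a : ℕ → K) (k : ℕ) :
    drinE K q n t a (k + 1)
      = drinS K q n a (drinE K q n t a) (k + 1) / (t ^ q ^ (k + 1) - t) := by
  rw [drinE, drinS]
  congr 1
  exact Finset.sum_attach _ fun i => a i * if i ≤ k + 1 then drinE K q n t a (k + 1 - i) ^ q ^ i else 0

open scoped Classical in
lemma key_iff (p : ℕ) [Fact p.Prime] [CharP K p] {q m : ℕ} (hm : 0 < m) (hqm : q = p ^ m)
    (t : K) (n : ℕ) (a : ℕ → K) (e : ℕ → K) :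
    (PowerSeries.C t * qPowerSeries K q e
          + ∑ i ∈ Finset.Icc 1 n, PowerSeries.C (a i) * (qPowerSeries K q e) ^ (q ^ i)
        = qPowerSeries K q (fun i => t ^ (q ^ i) * e i))
    ↔ ∀ k, t * e k + drinS K q n a e k = t ^ q ^ k * e k := by
  have hq2 : 2 ≤ q := by
    have h2p : 2 ≤ p := (Fact.out : p.Prime).two_le
    calc 2 ≤ p := h2p
      _ ≤ p ^ m := Nat.le_self_pow hm.ne' p
      _ = q := hqm.symm
  constructor
  · intro h k
    have h' := congrArg (PowerSeries.coeff (q ^ k)) h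
    rw [map_add, PowerSeries.coeff_C_mul, coeff_qPS hq2, map_sum,
      coeff_qPS hq2 (fun i => t ^ q ^ i * e i) k] at h'
    simp only [PowerSeries.coeff_C_mul, coeff_E_pow p hq2 hqm] at h'
    simpa [drinS] using h'
  · intro h
    ext N
    rw [map_add, PowerSeries.coeff_C_mul, map_sum]
    simp only [PowerSeries.coeff_C_mul]
    by_cases hN : ∃ j : ℕ, q ^ j = N
    · obtain ⟨k, rfl⟩ := hN
      rw [coeff_qPS hq2, coeff_qPS hq2]
      simp only [coeff_E_pow p hq2 hqm]
      simpa [drinS] using h k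
    · rw [coeff_qPS_ne e hN, coeff_qPS_ne _ hN, mul_zero,
        Finset.sum_eq_zero fun i _ => by rw [coeff_E_pow_ne p hq2 hqm e i hN, mul_zero],
        add_zero]

end Aux2

/-- Existence and uniqueness of the exponential of a Drinfeld module: there is a unique
power series `exp_E(X) = ∑_{i ≥ 0} e_i X^(q^i)` with `e_0 = 1` such that
`φ(t)(exp_E(X)) = exp_E(t X)`, where `φ(t) = t + a_1 τ + ⋯ + a_n τ^n` and `τ` is the
`q`-power Frobenius.  Here `K` is a field of characteristic `p` containing `k(t)`
(so that `t^(q^m) ≠ t` for `m ≥ 1`), and `q` is a positive power of `p`. -/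
theorem exists_unique_drinfeld_exponential
    (K : Type*) [Field K] (p : ℕ) [Fact p.Prime] [CharP K p]
    (q : ℕ) (hq : ∃ m : ℕ, 0 < m ∧ q = p ^ m)
    (t : K) (ht : ∀ m : ℕ, 0 < m → t ^ (q ^ m) ≠ t)
    (n : ℕ) (a : ℕ → K) (han : a n ≠ 0) :
    ∃! e : ℕ → K, e 0 = 1 ∧
      (PowerSeries.C : K →+* PowerSeries K) t * qPowerSeries K q e
          + ∑ i ∈ Finset.Icc 1 n, (PowerSeries.C : K →+* PowerSeries K) (a i) * (qPowerSeries K q e) ^ (q ^ i)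
        = qPowerSeries K q (fun i => t ^ (q ^ i) * e i) := by
  classical
  obtain ⟨m, hm, hqm⟩ := hq
  set E : ℕ → K := drinE K q n t a with hE
  have hsol : ∀ k, t * E k + drinS K q n a E k = t ^ q ^ k * E k := by
    intro k
    cases k with
    | zero =>
      have h0 : drinS K q n a E 0 = 0 := Finset.sum_eq_zero fun i hi => by
        have := (Finset.mem_Icc.mp hi).1
        rw [if_neg (by omega), mul_zero]
      rw [h0, add_zero, pow_zero, pow_one]
    | succ k =>
      have hD : t ^ q ^ (k + 1) - t ≠ 0 := sub_ne_zero.mpr (ht (k + 1) k.succ_pos)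
      rw [hE, drinE_succ]
      field_simp
      ring
  refine ⟨E, ⟨drinE_zero q n t a, (key_iff p hm hqm t n a E).mpr hsol⟩, ?_⟩
  rintro e' ⟨h0, heq⟩
  have h' := (key_iff p hm hqm t n a e').mp heq
  funext k
  induction k using Nat.strong_induction_on with
  | _ k ih =>
    match k with
    | 0 => rw [h0, hE, drinE_zero]
    | k + 1 =>
      have hD : t ^ q ^ (k + 1) - t ≠ 0 := sub_ne_zero.mpr (ht (k + 1) k.succ_pos)
      have h2 : e' (k + 1) = drinS K q n a e' (k + 1) / (t ^ q ^ (k + 1) - t) := by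
        rw [eq_div_iff hD]
        linear_combination (-1 : K) * h' (k + 1)
      have h3 : drinS K q n a e' (k + 1) = drinS K q n a E (k + 1) := by
        unfold drinS
        refine Finset.sum_congr rfl fun i hi => ?_
        by_cases hik : i ≤ k + 1
        · rw [if_pos hik, if_pos hik,
            ih (k + 1 - i) (by have := (Finset.mem_Icc.mp hi).1; omega)]
        · rw [if_neg hik, if_neg hik]
      rw [h2, h3, hE, ← drinE_succ]
end

section
/- In the setting of the previous lemma with n = 1: for V = F = k((1/t)), L = k[[1/t]], Λ₂ = k[t], and Λ₁ = c·k[t] for some c ∈ F^×, one has χ₁ − χ₂ = v(c), where χ_i is the Euler characteristic of the map δ_i: Λ_i ⊕ L → V, (λ,ℓ) ↦ λ − ℓ. -/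
open HahnSeries Set

namespace RegValAux

variable (k : Type*) [Field k]

/-- Submodule of Laurent series with coefficients supported in `s`. -/
def supp (s : Set ℤ) : Submodule k (LaurentSeries k) where
  carrier := {x | ∀ n ∉ s, x.coeff n = 0}
  add_mem' := fun {a b} ha hb n hn => by
    simp [HahnSeries.coeff_add, ha n hn, hb n hn]
  zero_mem' := fun n _ => rfl
  smul_mem' := fun r a ha n hn => by
    simp [HahnSeries.coeff_smul, ha n hn]

variable {k}

lemma mem_supp {s : Set ℤ} {x : LaurentSeries k} :
    x ∈ supp k s ↔ ∀ n ∉ s, x.coeff n = 0 := Iff.rfl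

lemma supp_mono {s t : Set ℤ} (h : s ⊆ t) : supp k s ≤ supp k t :=
  fun x hx n hn => hx n (fun hs => hn (h hs))

lemma supp_inf (s t : Set ℤ) : supp k s ⊓ supp k t = supp k (s ∩ t) := by
  apply le_antisymm
  · rintro x ⟨hs, ht⟩ n hn
    rcases not_and_or.mp hn with h | h
    · exact hs n h
    · exact ht n h
  · exact le_inf (supp_mono inter_subset_left) (supp_mono inter_subset_right)

variable (k) in
/-- Coefficient at `n` as a linear map. -/
def coeffLM (n : ℤ) : LaurentSeries k →ₗ[k] k where
  toFun x := x.coeff n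
  map_add' _ _ := HahnSeries.coeff_add
  map_smul' _ _ := HahnSeries.coeff_smul

@[simp] lemma coeffLM_apply (n : ℤ) (x : LaurentSeries k) : coeffLM k n x = x.coeff n := rfl

lemma sum_single_coeff (s : Finset ℤ) (g : ℤ → k) (n : ℤ) :
    (∑ i ∈ s, HahnSeries.single i (g i)).coeff n = if n ∈ s then g n else 0 := by
  have : (∑ i ∈ s, HahnSeries.single i (g i)).coeff n
      = ∑ i ∈ s, (HahnSeries.single i (g i)).coeff n := by
    rw [← coeffLM_apply n, map_sum]; rfl
  rw [this]
  simp only [HahnSeries.coeff_single]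
  by_cases hn : n ∈ s
  · rw [if_pos hn]
    exact (Finset.sum_eq_single n (fun b _ hb => if_neg (fun (h : n = b) => hb h.symm))
      (fun h => absurd hn h)).trans (if_pos rfl)
  · rw [if_neg hn]
    exact Finset.sum_eq_zero (fun x hx => if_neg (fun (h : n = x) => hn (h ▸ hx)))

variable (k) in
/-- The coefficients-on-`s` projection. -/
def proj (s : Finset ℤ) : LaurentSeries k →ₗ[k] (s → k) :=
  LinearMap.pi (fun i => coeffLM k (i : ℤ))

lemma proj_surjective (s : Finset ℤ) : Function.Surjective (proj k s) := by
  intro g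
  refine ⟨∑ i ∈ s, HahnSeries.single i (if h : i ∈ s then g ⟨i, h⟩ else 0), ?_⟩
  funext i
  show (∑ j ∈ s, _ : LaurentSeries k).coeff (i : ℤ) = g i
  rw [sum_single_coeff, if_pos i.2, dif_pos i.2]

lemma ker_proj (s : Finset ℤ) : LinearMap.ker (proj k s) = supp k (↑s)ᶜ := by
  ext x
  simp only [LinearMap.mem_ker, proj, LinearMap.pi_apply, mem_supp]
  constructor
  · intro h n hn
    have hn' : n ∈ s := by simpa using hn
    exact congrFun h ⟨n, hn'⟩
  · intro h
    funext i
    exact h i (by simp)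

lemma finrank_quot_supp (s : Finset ℤ) :
    Module.finrank k (LaurentSeries k ⧸ supp k (↑s)ᶜ) = s.card := by
  have e1 : (LaurentSeries k ⧸ supp k (↑s)ᶜ) ≃ₗ[k] (s → k) :=
    (Submodule.quotEquivOfEq _ _ (ker_proj s).symm).trans
      ((proj k s).quotKerEquivOfSurjective (proj_surjective s))
  rw [e1.finrank_eq, Module.finrank_pi, Fintype.card_coe]

lemma finrank_supp (s : Finset ℤ) :
    Module.finrank k (supp k (↑s : Set ℤ)) = s.card := by
  have e1 : (supp k (↑s : Set ℤ)) ≃ₗ[k] (s → k) := by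
    refine LinearEquiv.ofBijective ((proj k s).comp (Submodule.subtype _)) ⟨?_, ?_⟩
    · intro x y hxy
      ext n
      by_cases hn : n ∈ s
      · exact congrFun hxy ⟨n, hn⟩
      · rw [x.2 n (by simpa using hn), y.2 n (by simpa using hn)]
    · intro g
      refine ⟨⟨∑ i ∈ s, HahnSeries.single i (if h : i ∈ s then g ⟨i, h⟩ else 0), ?_⟩, ?_⟩
      · intro n hn
        rw [sum_single_coeff, if_neg (by simpa using hn)]
      · funext i
        show (∑ j ∈ s, _ : LaurentSeries k).coeff (i : ℤ) = g i
        rw [sum_single_coeff, if_pos i.2, dif_pos i.2]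
  rw [e1.finrank_eq, Module.finrank_pi, Fintype.card_coe]

/-- Truncation: keep only coefficients at indices `< e`. -/
def trunc (e : ℤ) (x : LaurentSeries k) : LaurentSeries k where
  coeff n := if n < e then x.coeff n else 0
  isPWO_support' := x.isPWO_support.mono (by
    intro n hn
    simp only [Function.mem_support] at hn ⊢
    intro h
    rw [h, if_pos] at hn <;> simp_all)

@[simp] lemma trunc_coeff (e : ℤ) (x : LaurentSeries k) (n : ℤ) :
    (trunc e x).coeff n = if n < e then x.coeff n else 0 := rfl

lemma sup_supp_eq (e : ℤ) :
    supp k (Set.Iic 0) ⊔ supp k (Set.Ici e) = supp k (Set.Ioo 0 e)ᶜ := by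
  apply le_antisymm
  · refine sup_le (supp_mono ?_) (supp_mono ?_)
    · intro n hn
      simp only [Set.mem_Iic] at hn
      simp only [Set.mem_compl_iff, Set.mem_Ioo, not_and]
      omega
    · intro n hn
      simp only [Set.mem_Ici] at hn
      simp only [Set.mem_compl_iff, Set.mem_Ioo, not_and]
      omega
  · intro x hx
    refine Submodule.mem_sup.2 ⟨trunc 1 x, ?_, x - trunc 1 x, ?_, by ring⟩
    · intro n hn
      simp only [Set.mem_Iic, not_le] at hn
      rw [trunc_coeff, if_neg (by omega)]
    · intro n hn
      simp only [Set.mem_Ici, not_le] at hn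
      rw [HahnSeries.coeff_sub, trunc_coeff]
      by_cases h1 : n < 1
      · rw [if_pos h1, sub_self]
      · rw [if_neg h1, sub_zero]
        exact hx n (by simp only [Set.mem_compl_iff, Set.mem_Ioo, not_not]; constructor <;> omega)

lemma mem_supp_Ici_iff {e : ℤ} {x : LaurentSeries k} :
    x ∈ supp k (Set.Ici e) ↔ x = 0 ∨ e ≤ x.order := by
  constructor
  · intro hx
    by_cases h0 : x = 0
    · exact Or.inl h0
    · refine Or.inr ?_
      by_contra h
      exact h0 (HahnSeries.coeff_order_eq_zero.mp (hx _ (by simpa using h)))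
  · rintro (rfl | h) n hn
    · rfl
    · exact HahnSeries.coeff_eq_zero_of_lt_order (lt_of_lt_of_le (by simpa using hn) h)

lemma L_char (L : Submodule k (LaurentSeries k))
    (hL : (L : Set (LaurentSeries k)) =
      Set.range (fun f : PowerSeries k => (HahnSeries.ofPowerSeries ℤ k f : LaurentSeries k))) :
    L = supp k (Set.Ici 0) := by
  ext x
  rw [← SetLike.mem_coe, hL]
  constructor
  · rintro ⟨f, rfl⟩ n hn
    rw [Set.mem_Ici, not_le] at hn
    exact (PowerSeries.coeff_coe f n).trans (if_pos hn)
  · intro hx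
    refine ⟨PowerSeries.mk (fun m => x.coeff m), ?_⟩
    apply HahnSeries.coeff_injective
    funext n
    show ((PowerSeries.mk (fun m => x.coeff m) : PowerSeries k) : LaurentSeries k).coeff n
      = x.coeff n
    rw [PowerSeries.coeff_coe]
    by_cases hn : n < 0
    · rw [if_pos hn, hx n (by simpa using hn)]
    · rw [if_neg hn, PowerSeries.coeff_mk, Int.natAbs_of_nonneg (not_lt.mp hn)]

lemma halg (a : k) : algebraMap k (LaurentSeries k) a = HahnSeries.single (0 : ℤ) a := by
  have h1 : algebraMap k (LaurentSeries k) a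
      = HahnSeries.ofPowerSeries ℤ k (PowerSeries.C a) := rfl
  rw [h1, HahnSeries.ofPowerSeries_C, HahnSeries.C_apply]

lemma Lambda_char (t : LaurentSeries k) (ht : t = HahnSeries.single (-1 : ℤ) (1 : k))
    (Λ₂ : Submodule k (LaurentSeries k))
    (hΛ₂ : (Λ₂ : Set (LaurentSeries k)) =
      Set.range (fun p : Polynomial k => (Polynomial.aeval t p : LaurentSeries k))) :
    Λ₂ = supp k (Set.Iic 0) := by
  have ht_pow : ∀ m : ℕ, t ^ m = HahnSeries.single (-(m : ℤ)) (1 : k) := by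
    intro m
    rw [ht, HahnSeries.single_pow, one_pow, smul_neg, nsmul_eq_mul, mul_one]
  have key : ∀ (s : Finset ℤ), (∀ i ∈ s, i ≤ 0) → ∀ g : ℤ → k,
      Polynomial.aeval t (∑ i ∈ s, Polynomial.C (g i) * Polynomial.X ^ (-i).toNat)
        = ∑ i ∈ s, HahnSeries.single i (g i) := by
    intro s hs g
    rw [map_sum]
    refine Finset.sum_congr rfl (fun i hi => ?_)
    rw [map_mul, Polynomial.aeval_C, map_pow, Polynomial.aeval_X, ht_pow, halg,
      HahnSeries.single_mul_single, mul_one, zero_add,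
      Int.toNat_of_nonneg (by simpa using hs i hi), neg_neg]
  ext x
  rw [← SetLike.mem_coe, hΛ₂]
  constructor
  · rintro ⟨p, rfl⟩
    dsimp only
    induction p using Polynomial.induction_on' with
    | add p q hp hq => rw [map_add]; exact (supp k _).add_mem hp hq
    | monomial m a =>
      intro n hn
      rw [Set.mem_Iic, not_le] at hn
      rw [Polynomial.aeval_monomial, halg, ht_pow, HahnSeries.single_mul_single, zero_add,
        HahnSeries.coeff_single, if_neg (by omega)]
  · intro hx
    by_cases h0 : x = 0
    · exact ⟨0, by simp [h0]⟩
    · refine ⟨∑ i ∈ Finset.Icc x.order 0, Polynomial.C (x.coeff i) * Polynomial.X ^ (-i).toNat, ?_⟩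
      dsimp only
      rw [key _ (fun i hi => (Finset.mem_Icc.mp hi).2) x.coeff]
      apply HahnSeries.coeff_injective
      funext n
      rw [sum_single_coeff]
      by_cases hn : n ∈ Finset.Icc x.order 0
      · rw [if_pos hn]
      · rw [if_neg hn]
        rw [Finset.mem_Icc, not_and_or] at hn
        rcases hn with h | h
        · exact (HahnSeries.coeff_eq_zero_of_lt_order (not_le.mp h)).symm
        · exact (hx n (by simpa using h)).symm

variable (k) in
/-- Multiplication by a nonzero Laurent series, as a `k`-linear equivalence. -/
noncomputable def mulEquiv (c : LaurentSeries k) (hc : c ≠ 0) :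
    LaurentSeries k ≃ₗ[k] LaurentSeries k where
  toFun x := c * x
  invFun x := c⁻¹ * x
  map_add' := mul_add c
  map_smul' r x := by
    show c * (r • x) = r • (c * x)
    rw [← HahnSeries.single_zero_mul_eq_smul, ← HahnSeries.single_zero_mul_eq_smul,
      mul_left_comm]
  left_inv x := by
    show c⁻¹ * (c * x) = x
    rw [← mul_assoc, inv_mul_cancel₀ hc, one_mul]
  right_inv x := by
    show c * (c⁻¹ * x) = x
    rw [← mul_assoc, mul_inv_cancel₀ hc, one_mul]

@[simp] lemma mulEquiv_apply (c : LaurentSeries k) (hc : c ≠ 0) (x : LaurentSeries k) :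
    mulEquiv k c hc x = c * x := rfl

end RegValAux

open RegValAux in
/-- The `n = 1` case of the regulator-valuation lemma:  in `F = k((1/t))` (modelled as
`LaurentSeries k` in `u = 1/t`, so `t = u⁻¹ = single (-1) 1` and the additive valuation
is `HahnSeries.order`), take `L = k[[1/t]]`, `Λ₂ = k[t]` and `Λ₁ = c·k[t]` for
`c ∈ F^×`.  With `χ_i = dim_k (Λ_i ∩ L) - dim_k (F/(Λ_i + L))` the Euler characteristic
of `δ_i : Λ_i ⊕ L → F, (λ,ℓ) ↦ λ - ℓ`, one has `χ₁ - χ₂ = v(c)` (note `det ρ = c`,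
so this is `v(det ρ) = χ₁ - χ₂`). -/
theorem regulator_valuation_rank_one (k : Type*) [Field k] [Fintype k]
    (t : LaurentSeries k) (ht : t = HahnSeries.single (-1 : ℤ) (1 : k))
    (c : LaurentSeries k) (hc : c ≠ 0)
    (L Λ₁ Λ₂ : Submodule k (LaurentSeries k))
    (hL : (L : Set (LaurentSeries k)) =
      Set.range (fun f : PowerSeries k => (HahnSeries.ofPowerSeries ℤ k f : LaurentSeries k)))
    (hΛ₂ : (Λ₂ : Set (LaurentSeries k)) =
      Set.range (fun p : Polynomial k => (Polynomial.aeval t p : LaurentSeries k)))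
    (hΛ₁ : (Λ₁ : Set (LaurentSeries k)) = (fun x => c * x) '' (Λ₂ : Set (LaurentSeries k))) :
    ((Module.finrank k (Λ₁ ⊓ L : Submodule k (LaurentSeries k)) : ℤ)
        - Module.finrank k (LaurentSeries k ⧸ (Λ₁ ⊔ L)))
      - ((Module.finrank k (Λ₂ ⊓ L : Submodule k (LaurentSeries k)) : ℤ)
        - Module.finrank k (LaurentSeries k ⧸ (Λ₂ ⊔ L)))
      = c.order := by
  have hL' : L = supp k (Set.Ici 0) := L_char L hL
  have hΛ₂' : Λ₂ = supp k (Set.Iic 0) := Lambda_char t ht Λ₂ hΛ₂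
  set d := c.order with hd
  set φ := mulEquiv k c hc with hφ
  have hΛ₁' : Λ₁ = Submodule.map (φ : LaurentSeries k →ₗ[k] LaurentSeries k) Λ₂ := by
    apply SetLike.coe_injective
    rw [Submodule.map_coe, hΛ₁]
    rfl
  have hcomap : Submodule.comap (φ : LaurentSeries k →ₗ[k] LaurentSeries k) L = supp k (Set.Ici (-d)) := by
    ext x
    rw [Submodule.mem_comap, hL']
    have hφx : (φ : LaurentSeries k →ₗ[k] LaurentSeries k) x = c * x := rfl
    rw [hφx, mem_supp_Ici_iff, mem_supp_Ici_iff]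
    by_cases hx : x = 0
    · simp [hx]
    · rw [HahnSeries.order_mul hc hx]
      constructor
      · rintro (h | h)
        · exact absurd ((mul_eq_zero.mp h).resolve_left hc) hx
        · exact Or.inr (by omega)
      · rintro (h | h)
        · exact absurd h hx
        · exact Or.inr (by omega)
  -- the two intersections
  have hinf : Λ₁ ⊓ L = Submodule.map (φ : LaurentSeries k →ₗ[k] LaurentSeries k) (Λ₂ ⊓ Submodule.comap (φ : LaurentSeries k →ₗ[k] LaurentSeries k) L) := by
    rw [Submodule.map_inf _ φ.injective,
      Submodule.map_comap_eq_of_surjective φ.surjective, hΛ₁']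
  have hsup : Submodule.map (φ : LaurentSeries k →ₗ[k] LaurentSeries k) (Λ₂ ⊔ Submodule.comap (φ : LaurentSeries k →ₗ[k] LaurentSeries k) L) = Λ₁ ⊔ L := by
    rw [Submodule.map_sup, Submodule.map_comap_eq_of_surjective φ.surjective, hΛ₁']
  have hband1 : Λ₂ ⊓ Submodule.comap (φ : LaurentSeries k →ₗ[k] LaurentSeries k) L = supp k (↑(Finset.Icc (-d) 0) : Set ℤ) := by
    rw [hcomap, hΛ₂', supp_inf, Set.inter_comm, Set.Ici_inter_Iic, Finset.coe_Icc]
  have hband2 : Λ₂ ⊔ Submodule.comap (φ : LaurentSeries k →ₗ[k] LaurentSeries k) L = supp k ((↑(Finset.Ioo 0 (-d)) : Set ℤ))ᶜ := by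
    rw [hcomap, hΛ₂', sup_supp_eq, Finset.coe_Ioo]
  have hband3 : Λ₂ ⊓ L = supp k (↑(Finset.Icc (0:ℤ) 0) : Set ℤ) := by
    rw [hL', hΛ₂', supp_inf, Set.inter_comm, Set.Ici_inter_Iic, Finset.coe_Icc]
  have hband4 : Λ₂ ⊔ L = supp k ((↑(Finset.Ioo (0:ℤ) 0) : Set ℤ))ᶜ := by
    rw [hL', hΛ₂', sup_supp_eq, Finset.coe_Ioo]
  have h1 : Module.finrank k (Λ₁ ⊓ L : Submodule k (LaurentSeries k)) = (d + 1).toNat := by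
    rw [hinf]
    have hmr : Module.finrank k (Submodule.map (φ : LaurentSeries k →ₗ[k] LaurentSeries k) (Λ₂ ⊓ Submodule.comap (φ : LaurentSeries k →ₗ[k] LaurentSeries k) L) :
          Submodule k (LaurentSeries k))
        = Module.finrank k (Λ₂ ⊓ Submodule.comap (φ : LaurentSeries k →ₗ[k] LaurentSeries k) L : Submodule k (LaurentSeries k)) :=
      LinearEquiv.finrank_map_eq φ _
    rw [hmr, hband1, finrank_supp, Int.card_Icc]
    congr 1
    omega
  have h2 : Module.finrank k (LaurentSeries k ⧸ (Λ₁ ⊔ L)) = (-d - 1).toNat := by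
    rw [← (Submodule.Quotient.equiv _ _ φ hsup).finrank_eq, hband2, finrank_quot_supp,
      Int.card_Ioo]
    congr 1
    omega
  have h3 : Module.finrank k (Λ₂ ⊓ L : Submodule k (LaurentSeries k)) = 1 := by
    rw [hband3, finrank_supp, Int.card_Icc]
    rfl
  have h4 : Module.finrank k (LaurentSeries k ⧸ (Λ₂ ⊔ L)) = 0 := by
    rw [hband4, finrank_quot_supp, Int.card_Ioo]
    rfl
  rw [h1, h2, h3, h4]
  omega
end

section
/- (Non-archimedean inverse function theorem for entire q-linear series) Let F be a complete non-archimedean normed field (or finite product of such) of characteristic p containing F_q, and f(x) = x + Σ_{i≥1} e_i x^{q^i} with ‖e_i‖ → 0 (entire). Then there exists ε > 0 such that f maps the ball B = {x : ‖x‖ ≤ ε} bijectively onto itself, and f is an isometry on B. -/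
open IsUltrametricDist Filter

/-- Non-archimedean inverse function theorem for entire `q`-linear series: over a complete
non-archimedean (ultrametric) normed field of characteristic `p`, if
`f(x) = x + ∑_{i ≥ 1} e_i x^(q^i)` with `‖e_i‖ → 0` (and `q` a positive power of `p`),
then there is `ε > 0` such that the series converges on the ball `B = {x : ‖x‖ ≤ ε}`,
`f` maps `B` bijectively onto itself, and `f` is an isometry on `B`. -/
theorem nonarchimedean_inverse_function_theorem
    (F : Type*) [NontriviallyNormedField F] [CompleteSpace F] [IsUltrametricDist F]
    (p : ℕ) [Fact p.Prime] [CharP F p]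
    (q : ℕ) (m : ℕ) (hm : 0 < m) (hq : q = p ^ m)
    (e : ℕ → F) (he0 : e 0 = 1)
    (he : Filter.Tendsto (fun i => ‖e i‖) Filter.atTop (nhds 0)) :
    ∃ ε : ℝ, 0 < ε ∧
      (∀ x : F, ‖x‖ ≤ ε → Summable (fun i => e i * x ^ (q ^ i))) ∧
      Set.BijOn (fun x => ∑' i : ℕ, e i * x ^ (q ^ i))
        {x : F | ‖x‖ ≤ ε} {x : F | ‖x‖ ≤ ε} ∧
      (∀ x y : F, ‖x‖ ≤ ε → ‖y‖ ≤ ε →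
        ‖(∑' i : ℕ, e i * x ^ (q ^ i)) - (∑' i : ℕ, e i * y ^ (q ^ i))‖ = ‖x - y‖) := by
  classical
  set f : F → F := fun x => ∑' i : ℕ, e i * x ^ (q ^ i) with hf
  have norm_sub_le_max : ∀ a b : F, ‖a - b‖ ≤ max ‖a‖ ‖b‖ := by
    intro a b
    have := norm_add_le_max a (-b)
    rwa [norm_neg, ← sub_eq_add_neg] at this
  -- the sub rule for q-th power maps
  have hfrob : ∀ (x y : F) (i : ℕ), (x - y) ^ q ^ i = x ^ q ^ i - y ^ q ^ i := by
    intro x y i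
    rw [hq, ← pow_mul]
    exact sub_pow_char_pow ..
  -- q ≥ 2
  have hq2 : 2 ≤ q := by
    rw [hq]
    calc 2 ≤ p := (Fact.out : p.Prime).two_le
    _ = p ^ 1 := (pow_one p).symm
    _ ≤ p ^ m := Nat.pow_le_pow_right (Fact.out : p.Prime).pos hm
  -- bound on coefficients
  obtain ⟨C, hC1, hC⟩ : ∃ C : ℝ, 1 ≤ C ∧ ∀ i, ‖e i‖ ≤ C := by
    have hbdd : BddAbove (Set.range fun i => ‖e i‖) := he.bddAbove_range
    refine ⟨max (sSup (Set.range fun i => ‖e i‖)) 1, le_max_right _ _, fun i => ?_⟩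
    exact le_trans (le_csSup hbdd ⟨i, rfl⟩) (le_max_left _ _)
  have hC0 : 0 < C := lt_of_lt_of_le one_pos hC1
  set ε : ℝ := min (1/2) (1/(2*C)) with hεdef
  have hε : 0 < ε := lt_min (by norm_num) (by positivity)
  have hε1 : ε ≤ 1 := le_trans (min_le_left _ _) (by norm_num)
  set k : ℝ := C * ε with hkdef
  have hk0 : 0 ≤ k := by positivity
  have hk : k < 1 := by
    have h1 : ε ≤ 1/(2*C) := min_le_right _ _
    have h2 : C * ε ≤ C * (1/(2*C)) := mul_le_mul_of_nonneg_left h1 hC0.le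
    have h3 : C * (1/(2*C)) = 1/2 := by field_simp
    calc k = C * ε := rfl
    _ ≤ 1/2 := h3 ▸ h2
    _ < 1 := by norm_num
  -- summability on the ball
  have hsum : ∀ x : F, ‖x‖ ≤ ε → Summable (fun i => e i * x ^ (q ^ i)) := by
    intro x hx
    have hx1 : ‖x‖ ≤ 1 := hx.trans hε1
    rw [summable_iff_vanishing_norm]
    intro δ hδ
    obtain ⟨N, hN⟩ := (Metric.tendsto_atTop.mp he (δ/2) (by positivity))
    refine ⟨Finset.range N, fun t ht => ?_⟩
    have hbound : ∀ i ∈ t, ‖e i * x ^ (q ^ i)‖ ≤ δ/2 := by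
      intro i hi
      have hiN : N ≤ i := by
        by_contra h
        exact (Finset.disjoint_left.mp ht hi) (Finset.mem_range.mpr (lt_of_not_ge h))
      have hd := hN i hiN
      rw [Real.dist_eq, sub_zero, abs_of_nonneg (norm_nonneg _)] at hd
      have hp1 : ‖x‖ ^ (q ^ i) ≤ 1 := pow_le_one₀ (norm_nonneg x) hx1
      calc ‖e i * x ^ (q ^ i)‖ = ‖e i‖ * ‖x‖ ^ (q ^ i) := by
            rw [norm_mul, norm_pow]
      _ ≤ ‖e i‖ * 1 := mul_le_mul_of_nonneg_left hp1 (norm_nonneg _)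
      _ ≤ δ/2 := by linarith
    calc ‖∑ i ∈ t, e i * x ^ (q ^ i)‖ ≤ δ/2 :=
          norm_sum_le_of_forall_le_of_nonneg (by positivity) hbound
    _ < δ := by linarith
  -- tail
  set T : F → F := fun x => ∑' i : ℕ, e (i+1) * x ^ (q ^ (i+1)) with hT
  have hsumT : ∀ x : F, ‖x‖ ≤ ε → Summable (fun i => e (i+1) * x ^ (q ^ (i+1))) := by
    intro x hx
    exact ((hsum x hx).comp_injective Nat.succ_injective)
  have hsplit : ∀ x : F, ‖x‖ ≤ ε → f x = x + T x := by
    intro x hx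
    have h := Summable.tsum_eq_zero_add (hsum x hx)
    simpa [he0] using h
  -- termwise bound on the tail
  have hterm : ∀ x : F, ‖x‖ ≤ ε → ∀ i : ℕ, ‖e (i+1) * x ^ (q ^ (i+1))‖ ≤ k * ‖x‖ := by
    intro x hx i
    have hn2 : 2 ≤ q ^ (i+1) := le_trans hq2 (Nat.le_self_pow (Nat.succ_ne_zero i) q)
    set n := q ^ (i+1) with hn
    have hx0 : 0 ≤ ‖x‖ := norm_nonneg x
    have h1 : ‖x‖ ^ n = ‖x‖ ^ (n-1) * ‖x‖ := by
      rw [← pow_succ]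
      congr 1
      omega
    have h2 : ‖x‖ ^ (n-1) ≤ ε ^ (n-1) := pow_le_pow_left₀ hx0 hx _
    have h3 : ε ^ (n-1) ≤ ε := by
      calc ε ^ (n-1) ≤ ε ^ 1 := pow_le_pow_of_le_one hε.le hε1 (by omega)
      _ = ε := pow_one ε
    have h4 : ‖x‖ ^ (n-1) ≤ ε := le_trans h2 h3
    have h5 : (0:ℝ) ≤ ‖x‖ ^ (n-1) := by positivity
    calc ‖e (i+1) * x ^ n‖ = ‖e (i+1)‖ * (‖x‖ ^ (n-1) * ‖x‖) := by
          rw [norm_mul, norm_pow, h1]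
    _ ≤ C * (ε * ‖x‖) := by
          have h6 := hC (i+1)
          exact mul_le_mul h6 (mul_le_mul_of_nonneg_right h4 hx0) (by positivity) hC0.le
    _ = k * ‖x‖ := by ring
  have htail : ∀ x : F, ‖x‖ ≤ ε → ‖T x‖ ≤ k * ‖x‖ := by
    intro x hx
    exact norm_tsum_le_of_forall_le_of_nonneg (by positivity) (hterm x hx)
  -- norm preservation
  have hnorm : ∀ x : F, ‖x‖ ≤ ε → ‖f x‖ = ‖x‖ := by
    intro x hx
    rw [hsplit x hx]
    rcases eq_or_ne x 0 with rfl | hx0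
    · have h0 : ‖T 0‖ ≤ 0 := by simpa using htail 0 (by simpa using hε.le)
      have hT0 : T 0 = 0 := norm_le_zero_iff.mp h0
      simp [hT0]
    · have hxpos : 0 < ‖x‖ := norm_pos_iff.mpr hx0
      have hTlt : ‖T x‖ < ‖x‖ := lt_of_le_of_lt (htail x hx) (by nlinarith)
      have hle : ‖x + T x‖ ≤ ‖x‖ := le_trans (norm_add_le_max x (T x))
        (max_le le_rfl hTlt.le)
      have hge : ‖x‖ ≤ ‖x + T x‖ := by
        by_contra hcon
        push_neg at hcon
        have he1 : x = (x + T x) - T x := by ring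
        have h2 : ‖(x + T x) - T x‖ ≤ max ‖x + T x‖ ‖T x‖ := norm_sub_le_max _ _
        have h3 : max ‖x + T x‖ ‖T x‖ < ‖x‖ := max_lt hcon hTlt
        rw [← he1] at h2
        exact absurd (h2.trans_lt h3) (lt_irrefl _)
      exact le_antisymm hle hge
  -- additivity
  have hadd : ∀ x y : F, ‖x‖ ≤ ε → ‖y‖ ≤ ε → f x - f y = f (x - y) := by
    intro x y hx hy
    rw [hf]
    simp only
    rw [← Summable.tsum_sub (hsum x hx) (hsum y hy)]
    congr 1
    funext i
    rw [hfrob x y i, mul_sub]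
  have hxysub : ∀ x y : F, ‖x‖ ≤ ε → ‖y‖ ≤ ε → ‖x - y‖ ≤ ε := by
    intro x y hx hy
    exact le_trans (norm_sub_le_max x y) (max_le hx hy)
  -- isometry
  have hiso : ∀ x y : F, ‖x‖ ≤ ε → ‖y‖ ≤ ε → ‖f x - f y‖ = ‖x - y‖ := by
    intro x y hx hy
    rw [hadd x y hx hy, hnorm _ (hxysub x y hx hy)]
  -- tail additivity
  have hTadd : ∀ x y : F, ‖x‖ ≤ ε → ‖y‖ ≤ ε → T x - T y = T (x - y) := by
    intro x y hx hy
    have h1 : f x = x + T x := hsplit x hx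
    have h2 : f y = y + T y := hsplit y hy
    have h3 : f (x - y) = (x - y) + T (x - y) := hsplit _ (hxysub x y hx hy)
    have h4 := hadd x y hx hy
    rw [h1, h2, h3] at h4
    linear_combination h4
  refine ⟨ε, hε, hsum, ⟨?_, ?_, ?_⟩, hiso⟩
  · -- MapsTo
    intro x hx
    simp only [Set.mem_setOf_eq] at hx ⊢
    rw [hnorm x hx]
    exact hx
  · -- InjOn
    intro x hx y hy hxy
    simp only [Set.mem_setOf_eq] at hx hy
    have h : ‖x - y‖ = 0 := by
      rw [← hiso x y hx hy]
      show ‖f x - f y‖ = 0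
      rw [hxy, sub_self, norm_zero]
    rwa [norm_eq_zero, sub_eq_zero] at h
  · -- SurjOn
    intro y hy
    simp only [Set.mem_setOf_eq] at hy
    set S : Set F := {x : F | ‖x‖ ≤ ε} with hS
    have hclosed : IsClosed S := isClosed_le continuous_norm continuous_const
    haveI : CompleteSpace S := hclosed.completeSpace_coe
    have hmem : ∀ x : S, ‖y - T x.1‖ ≤ ε := by
      intro x
      refine le_trans (norm_sub_le_max y (T x.1)) (max_le hy ?_)
      calc ‖T x.1‖ ≤ k * ‖x.1‖ := htail x.1 x.2
      _ ≤ 1 * ε := by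
            have := x.2
            simp only [hS, Set.mem_setOf_eq] at this
            nlinarith [norm_nonneg x.1]
      _ = ε := one_mul ε
    set g : S → S := fun x => ⟨y - T x.1, hmem x⟩ with hg
    have hlip : LipschitzWith ⟨k, hk0⟩ g := by
      apply LipschitzWith.of_dist_le_mul
      intro a b
      have ha := a.2
      have hb := b.2
      simp only [hS, Set.mem_setOf_eq] at ha hb
      rw [Subtype.dist_eq, Subtype.dist_eq]
      simp only [hg, dist_eq_norm]
      have h1 : (y - T a.1) - (y - T b.1) = -(T a.1 - T b.1) := by ring
      rw [h1, norm_neg, hTadd a.1 b.1 ha hb]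
      calc ‖T (a.1 - b.1)‖ ≤ k * ‖a.1 - b.1‖ := htail _ (hxysub a.1 b.1 ha hb)
      _ = (⟨k, hk0⟩ : NNReal) * ‖a.1 - b.1‖ := rfl
    have hcontr : ContractingWith ⟨k, hk0⟩ g := ⟨by exact_mod_cast hk, hlip⟩
    obtain ⟨x₀, hfix, -⟩ := hcontr.exists_fixedPoint ⟨y, hy⟩ (edist_ne_top _ _)
    refine ⟨x₀.1, x₀.2, ?_⟩
    have hx₀ : ‖x₀.1‖ ≤ ε := x₀.2
    have heq : y - T x₀.1 = x₀.1 := congrArg Subtype.val hfix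
    show f x₀.1 = y
    rw [hsplit x₀.1 hx₀]
    linear_combination -heq
end
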